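/- Let D be a biplane with parameters (121,16,2) and x an automorphism of odd prime order p ∈ {5,7,13}, fixing a block B. Then (p, s, f) ∈ {(5,1,1), (7,2,2), (13,3,4)}, where s is the number of fixed points of x in B and f the total number of fixed points of x. -/

import Mathlib

open Finset


open Finset

lemma no_swap' {α : Type*} (σ : Equiv.Perm α) {p : ℕ} (hodd : p % 2 = 1)
    (h1 : σ ^ p = 1) {x y : α} (hxy : σ x = y) (hyx : σ y = x) : x = y := by
  have key : ∀ z : α, (σ ^ 2) z = z → ∀ k, (σ ^ (2 * k)) z = z := by
    intro z hz k
    induction k with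
    | zero => simp
    | succ n ih =>
      have : 2 * (n + 1) = 2 * n + 2 := by ring
      rw [this, pow_add, Equiv.Perm.mul_apply, hz, ih]
  have hy2 : (σ ^ 2) y = y := by
    rw [sq, Equiv.Perm.mul_apply, hyx, hxy]
  have hpk : p = 2 * (p / 2) + 1 := by omega
  have : (σ ^ p) x = y := by
    rw [hpk, pow_add, pow_one, Equiv.Perm.mul_apply, hxy, key y hy2]
  rw [h1] at this
  simpa using this

lemma pair_fixed' {α : Type*} [DecidableEq α] (σ : Equiv.Perm α) {p : ℕ}
    (hodd : p % 2 = 1) (h1 : σ ^ p = 1) (t : Finset α) (ht2 : t.card = 2)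
    (hcl : ∀ a ∈ t, σ a ∈ t) : ∀ a ∈ t, σ a = a := by
  obtain ⟨x, y, hxy, rfl⟩ := Finset.card_eq_two.mp ht2
  have hx := hcl x (by simp)
  have hy := hcl y (by simp)
  simp only [Finset.mem_insert, Finset.mem_singleton] at hx hy
  have main : σ x = x ∧ σ y = y := by
    rcases hx with hx | hx
    · rcases hy with hy | hy
      · exact absurd (σ.injective (hy.trans hx.symm)) hxy.symm
      · exact ⟨hx, hy⟩
    · rcases hy with hy | hy
      · exact absurd (no_swap' σ hodd h1 hx hy) hxy
      · exact absurd (σ.injective (hx.trans hy.symm)) hxy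
  intro a ha
  simp only [Finset.mem_insert, Finset.mem_singleton] at ha
  rcases ha with rfl | rfl
  · exact main.1
  · exact main.2

lemma pow_mod' {α : Type*} (σ : Equiv.Perm α) {p : ℕ} (h1 : σ ^ p = 1) (k : ℕ) :
    σ ^ k = σ ^ (k % p) := by
  conv_lhs => rw [← Nat.div_add_mod k p]
  rw [pow_add, pow_mul, h1, one_pow, one_mul]

lemma modeq_fixed' {α : Type*} [DecidableEq α] (σ : Equiv.Perm α) {p : ℕ}
    (hp : p.Prime) (h1 : σ ^ p = 1) (T : Finset α) (hT : ∀ a ∈ T, σ a ∈ T) :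
    T.card ≡ (T.filter fun q => σ q = q).card [MOD p] := by
  suffices H : ∀ (n : ℕ) (T : Finset α), T.card ≤ n → (∀ a ∈ T, σ a ∈ T) →
      T.card ≡ (T.filter fun q => σ q = q).card [MOD p] from
    H T.card T le_rfl hT
  clear hT T
  intro n
  induction n with
  | zero =>
    intro T hc _
    interval_cases h : T.card
    · rw [Finset.card_eq_zero] at h
      subst h
      simp [Nat.ModEq.refl]
  | succ n ihn =>
    intro T hc hT
    by_cases hall : ∀ a ∈ T, σ a = a
    · rw [Finset.filter_true_of_mem hall]
    · push_neg at hall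
      obtain ⟨q, hqT, hq⟩ := hall
      have horbT : ∀ i : ℕ, (σ ^ i) q ∈ T := by
        intro i
        induction i with
        | zero => simpa using hqT
        | succ m ihm =>
          have hps : σ ^ (m + 1) = σ * σ ^ m := by rw [pow_succ']
          rw [hps, Equiv.Perm.mul_apply]
          exact hT _ ihm
      have hp1 : 1 < p := hp.one_lt
      have key : ∀ d : ℕ, 0 < d → d < p → (σ ^ d) q = q → False := by
        intro d hd0 hdp hdq
        have hnd : ¬ p ∣ d := fun hdvd => by
          have := Nat.le_of_dvd hd0 hdvd; omega
        have hcop : Nat.Coprime d p := Nat.Coprime.symm ((Nat.Prime.coprime_iff_not_dvd hp).mpr hnd)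
        obtain ⟨u, -, hu⟩ := Nat.exists_mul_mod_eq_one_of_coprime hcop hp1
        have hfix : ∀ u : ℕ, ((σ ^ d) ^ u) q = q := by
          intro u
          induction u with
          | zero => simp
          | succ m ihm => rw [pow_succ, Equiv.Perm.mul_apply, hdq, ihm]
        have : (σ ^ (d * u)) q = q := by rw [pow_mul]; exact hfix u
        rw [pow_mod' σ h1, hu, pow_one] at this
        exact hq this
      have hinj : ∀ i < p, ∀ j < p, (σ ^ i) q = (σ ^ j) q → i = j := by
        intro i hi j hj hij
        rcases Nat.lt_trichotomy i j with h | h | h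
        · exfalso
          have h2 : (σ ^ i) ((σ ^ (j - i)) q) = (σ ^ i) q := by
            rw [← Equiv.Perm.mul_apply, ← pow_add, Nat.add_sub_cancel' h.le, hij]
          exact key (j - i) (by omega) (by omega) ((σ ^ i).injective h2)
        · exact h
        · exfalso
          have h2 : (σ ^ j) ((σ ^ (i - j)) q) = (σ ^ j) q := by
            rw [← Equiv.Perm.mul_apply, ← pow_add, Nat.add_sub_cancel' h.le, ← hij]
          exact key (i - j) (by omega) (by omega) ((σ ^ j).injective h2)
      set O : Finset α := (Finset.range p).image (fun i => (σ ^ i) q) with hO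
      have hOT : O ⊆ T := by
        intro a ha
        rw [hO, Finset.mem_image] at ha
        obtain ⟨i, _, rfl⟩ := ha
        exact horbT i
      have hcardO : O.card = p := by
        rw [hO, Finset.card_image_of_injOn, Finset.card_range]
        intro i hi j hj hij
        exact hinj i (Finset.mem_range.mp hi) j (Finset.mem_range.mp hj) hij
      have hOnofix : ∀ a ∈ O, σ a ≠ a := by
        intro a ha
        rw [hO, Finset.mem_image] at ha
        obtain ⟨i, _, rfl⟩ := ha
        intro hfa
        have : (σ ^ i) (σ q) = (σ ^ i) q := by
          rw [← Equiv.Perm.mul_apply, ← pow_succ, pow_succ', Equiv.Perm.mul_apply, hfa]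
        exact hq ((σ ^ i).injective this)
      have hmemO : ∀ i : ℕ, (σ ^ i) q ∈ O := by
        intro i
        rw [hO, Finset.mem_image]
        exact ⟨i % p, Finset.mem_range.mpr (Nat.mod_lt _ (by omega)), by rw [← pow_mod' σ h1]⟩
      have hT'cl : ∀ a ∈ T \ O, σ a ∈ T \ O := by
        intro a ha
        rw [Finset.mem_sdiff] at ha ⊢
        refine ⟨hT a ha.1, fun hσa => ha.2 ?_⟩
        rw [hO, Finset.mem_image] at hσa
        obtain ⟨i, _, hi⟩ := hσa
        have : σ ((σ ^ (i + p - 1)) q) = σ a := by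
          rw [← Equiv.Perm.mul_apply, ← pow_succ']
          have : i + p - 1 + 1 = i + p := by omega
          rw [this, pow_mod' σ h1, Nat.add_mod_right, ← pow_mod' σ h1, hi]
        have ha' : a = (σ ^ (i + p - 1)) q := (σ.injective this).symm
        rw [ha']
        exact hmemO _
      have hple : p ≤ T.card := hcardO ▸ Finset.card_le_card hOT
      have hcard' : (T \ O).card = T.card - p := by rw [Finset.card_sdiff_of_subset hOT, hcardO]
      have hfil : T.filter (fun q => σ q = q) = (T \ O).filter (fun q => σ q = q) := by
        ext a
        simp only [Finset.mem_filter, Finset.mem_sdiff]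
        constructor
        · rintro ⟨haT, hfa⟩
          exact ⟨⟨haT, fun haO => hOnofix a haO hfa⟩, hfa⟩
        · rintro ⟨⟨haT, _⟩, hfa⟩
          exact ⟨haT, hfa⟩
      have ihres := ihn (T \ O) (by omega) hT'cl
      rw [hfil]
      calc T.card = (T \ O).card + p := by omega
        _ ≡ (T \ O).card [MOD p] := by
            unfold Nat.ModEq
            rw [Nat.add_mod_right]
        _ ≡ _ [MOD p] := ihres

open Finset

lemma dc' {α β : Type*} (A : Finset α) (B : Finset β) (R : α → β → Prop)
    [∀ a b, Decidable (R a b)] :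
    ∑ a ∈ A, (B.filter (fun b => R a b)).card
      = ∑ b ∈ B, (A.filter (fun a => R a b)).card := by
  simp_rw [Finset.card_filter]
  exact Finset.sum_comm

section design
variable {P : Type*} [Fintype P] [DecidableEq P]

lemma repl' (hv : Fintype.card P = 121) (𝓑 : Finset (Finset P))
    (hk : ∀ b ∈ 𝓑, b.card = 16)
    (hpair : ∀ p q : P, p ≠ q → (𝓑.filter (fun b => p ∈ b ∧ q ∈ b)).card = 2)
    (q : P) : (𝓑.filter (fun b => q ∈ b)).card = 16 := by
  have key := dc' (Finset.univ.erase q) (𝓑.filter (fun b => q ∈ b)) (fun x b => x ∈ b)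
  have h1 : ∀ x ∈ Finset.univ.erase q,
      ((𝓑.filter (fun b => q ∈ b)).filter (fun b => x ∈ b)).card = 2 := by
    intro x hx
    rw [Finset.filter_filter]
    exact hpair q x (Ne.symm (Finset.ne_of_mem_erase hx))
  rw [Finset.sum_congr rfl h1, Finset.sum_const,
    Finset.card_erase_of_mem (Finset.mem_univ q), Finset.card_univ, hv] at key
  have h2 : ∀ b ∈ 𝓑.filter (fun b => q ∈ b),
      ((Finset.univ.erase q).filter (fun x => x ∈ b)).card = 15 := by
    intro b hb
    rw [Finset.mem_filter] at hb
    have : (Finset.univ.erase q).filter (fun x => x ∈ b) = b.erase q := by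
      ext x
      simp only [Finset.mem_filter, Finset.mem_erase, Finset.mem_univ, true_and, and_comm]
    rw [this, Finset.card_erase_of_mem hb.2, hk b hb.1]
  rw [Finset.sum_congr rfl h2, Finset.sum_const] at key
  simp only [smul_eq_mul] at key
  omega

lemma inter2' (hv : Fintype.card P = 121) (𝓑 : Finset (Finset P))
    (hcard : 𝓑.card = 121) (hk : ∀ b ∈ 𝓑, b.card = 16)
    (hpair : ∀ p q : P, p ≠ q → (𝓑.filter (fun b => p ∈ b ∧ q ∈ b)).card = 2)
    (b0 : Finset P) (hb0 : b0 ∈ 𝓑) (b : Finset P) (hb : b ∈ 𝓑) (hne : b ≠ b0) :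
    (b0 ∩ b).card = 2 := by
  set rest := 𝓑.erase b0 with hrest
  have hrestcard : rest.card = 120 := by
    rw [hrest, Finset.card_erase_of_mem hb0, hcard]
  -- Sum1 : ∑ b ∈ rest, (b0 ∩ b).card = 240
  have key1 := dc' b0 rest (fun x b => x ∈ b)
  have h1 : ∀ x ∈ b0, (rest.filter (fun b => x ∈ b)).card = 15 := by
    intro x hx
    have : rest.filter (fun b => x ∈ b) = (𝓑.filter (fun b => x ∈ b)).erase b0 := by
      rw [hrest, Finset.filter_erase]
    rw [this, Finset.card_erase_of_mem (Finset.mem_filter.mpr ⟨hb0, hx⟩),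
      repl' hv 𝓑 hk hpair x]
  have h2 : ∀ c ∈ rest, (b0.filter (fun x => x ∈ c)).card = (b0 ∩ c).card := by
    intro c _
    rw [Finset.filter_mem_eq_inter]
  rw [Finset.sum_congr rfl h1, Finset.sum_const, hk b0 hb0,
    Finset.sum_congr rfl h2] at key1
  simp only [smul_eq_mul] at key1
  -- Sum2 : ∑ b ∈ rest, ((b0 ∩ b).card * (b0 ∩ b).card - (b0 ∩ b).card) = 240
  have key2 := dc' b0.offDiag rest (fun z b => z.1 ∈ b ∧ z.2 ∈ b)
  have h3 : ∀ z ∈ b0.offDiag, (rest.filter (fun b => z.1 ∈ b ∧ z.2 ∈ b)).card = 1 := by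
    intro z hz
    rw [Finset.mem_offDiag] at hz
    have : rest.filter (fun b => z.1 ∈ b ∧ z.2 ∈ b)
        = (𝓑.filter (fun b => z.1 ∈ b ∧ z.2 ∈ b)).erase b0 := by
      rw [hrest, Finset.filter_erase]
    rw [this, Finset.card_erase_of_mem (Finset.mem_filter.mpr ⟨hb0, hz.1, hz.2.1⟩),
      hpair z.1 z.2 hz.2.2]
  have h4 : ∀ c ∈ rest, (b0.offDiag.filter (fun z => z.1 ∈ c ∧ z.2 ∈ c)).card
      = (b0 ∩ c).card * (b0 ∩ c).card - (b0 ∩ c).card := by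
    intro c _
    have : b0.offDiag.filter (fun z => z.1 ∈ c ∧ z.2 ∈ c) = (b0 ∩ c).offDiag := by
      ext z
      simp only [Finset.mem_filter, Finset.mem_offDiag, Finset.mem_inter]
      tauto
    rw [this, Finset.offDiag_card]
  rw [Finset.sum_congr rfl h3, Finset.sum_const, Finset.offDiag_card, hk b0 hb0,
    Finset.sum_congr rfl h4] at key2
  simp only [smul_eq_mul, mul_one] at key2
  -- Sum3 : ∑ b ∈ rest, (b0 ∩ b).card * (b0 ∩ b).card = 480
  have hsum3 : ∑ c ∈ rest, (b0 ∩ c).card * (b0 ∩ c).card = 480 := by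
    have hterm : ∀ c ∈ rest, (b0 ∩ c).card * (b0 ∩ c).card
        = ((b0 ∩ c).card * (b0 ∩ c).card - (b0 ∩ c).card) + (b0 ∩ c).card := by
      intro c _
      have : (b0 ∩ c).card ≤ (b0 ∩ c).card * (b0 ∩ c).card := by
        nlinarith [Nat.zero_le ((b0 ∩ c).card)]
      omega
    rw [Finset.sum_congr rfl hterm, Finset.sum_add_distrib, ← key2, ← key1]
  -- variance trick over ℤ
  have hzero : ∑ c ∈ rest, (((b0 ∩ c).card : ℤ) - 2)^2 = 0 := by
    have expand : ∀ c ∈ rest, (((b0 ∩ c).card : ℤ) - 2)^2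
        = ((b0 ∩ c).card : ℤ) * ((b0 ∩ c).card : ℤ)
          - 4 * ((b0 ∩ c).card : ℤ) + 4 := by
      intro c _
      ring
    rw [Finset.sum_congr rfl expand, Finset.sum_add_distrib, Finset.sum_sub_distrib,
      ← Finset.mul_sum, Finset.sum_const, hrestcard]
    have c1 : ∑ c ∈ rest, ((b0 ∩ c).card : ℤ) * ((b0 ∩ c).card : ℤ)
        = ((∑ c ∈ rest, (b0 ∩ c).card * (b0 ∩ c).card : ℕ) : ℤ) := by
      push_cast
      rfl
    have c2 : ∑ c ∈ rest, ((b0 ∩ c).card : ℤ)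
        = ((∑ c ∈ rest, (b0 ∩ c).card : ℕ) : ℤ) := by
      push_cast
      rfl
    rw [c1, c2, hsum3, ← key1]
    push_cast
    ring
  have hb' : b ∈ rest := Finset.mem_erase.mpr ⟨hne, hb⟩
  have := (Finset.sum_eq_zero_iff_of_nonneg (fun c _ => sq_nonneg (((b0 ∩ c).card : ℤ) - 2))).mp hzero b hb'
  have h5 : ((b0 ∩ b).card : ℤ) = 2 := by
    have := pow_eq_zero_iff (n := 2) (by norm_num) |>.mp this
    linarith [sub_eq_zero.mp this]
  exact_mod_cast h5

end design



/-- Let D be a biplane with parameters (121,16,2) and x an automorphism of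
odd prime order p ∈ {5,7,13}, fixing a block B. Then (p,s,f) is one of
(5,1,1), (7,2,2), (13,3,4), where s is the number of fixed points of x in B
and f is the total number of fixed points of x. -/
theorem stmt_14 {P : Type*} [Fintype P] [DecidableEq P]
    (hv : Fintype.card P = 121)
    (𝓑 : Finset (Finset P)) (hcard : 𝓑.card = 121)
    (hk : ∀ b ∈ 𝓑, b.card = 16)
    (hpair : ∀ p q : P, p ≠ q →
      (𝓑.filter (fun b => p ∈ b ∧ q ∈ b)).card = 2)
    (σ : Equiv.Perm P) (hσ : ∀ b ∈ 𝓑, b.image σ ∈ 𝓑)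
    (p : ℕ) (hp : p = 5 ∨ p = 7 ∨ p = 13) (hord : orderOf σ = p)
    (B : Finset P) (hB : B ∈ 𝓑) (hBfix : B.image σ = B) :
    (p, (B.filter (fun q => σ q = q)).card,
        (Finset.univ.filter (fun q => σ q = q)).card) = (5, 1, 1) ∨
    (p, (B.filter (fun q => σ q = q)).card,
        (Finset.univ.filter (fun q => σ q = q)).card) = (7, 2, 2) ∨
    (p, (B.filter (fun q => σ q = q)).card,
        (Finset.univ.filter (fun q => σ q = q)).card) = (13, 3, 4) := by
  have pp : p.Prime := by rcases hp with rfl | rfl | rfl <;> norm_num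
  have podd : p % 2 = 1 := by rcases hp with rfl | rfl | rfl <;> norm_num
  have hσp : σ ^ p = 1 := by rw [← hord]; exact pow_orderOf_eq_one σ
  set s := (B.filter (fun q => σ q = q)).card with hs_def
  set f := (Finset.univ.filter (fun q => σ q = q)).card with hf_def
  -- basic invariance facts
  have hinv_mem : ∀ b : Finset P, b.image σ = b → ∀ a ∈ b, σ a ∈ b := by
    intro b hb a ha
    rw [← hb]
    exact Finset.mem_image_of_mem σ ha
  have himginj : Function.Injective (fun t : Finset P => t.image σ) :=
    fun t u h => Finset.image_injective σ.injective h
  -- s ≡ 16 mod p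
  have hs16 : 16 % p = s % p := by
    have := modeq_fixed' σ pp hσp B (hinv_mem B hBfix)
    rw [hk B hB] at this
    exact this
  have hs1 : 1 ≤ s := by
    rcases hp with rfl | rfl | rfl <;> omega
  -- every block through two distinct fixed points is fixed
  have fact2 : ∀ q r : P, σ q = q → σ r = r → q ≠ r →
      ∀ b ∈ 𝓑, q ∈ b → r ∈ b → b.image σ = b := by
    intro q r hq hr hqr b hb hqb hrb
    by_contra hbb
    set b' := b.image σ with hb'
    have hb'B : b' ∈ 𝓑 := hσ b hb
    have hqb' : q ∈ b' := by rw [hb', ← hq]; exact Finset.mem_image_of_mem σ hqb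
    have hrb' : r ∈ b' := by rw [hb', ← hr]; exact Finset.mem_image_of_mem σ hrb
    have hne : b' ≠ b := hbb
    have hPr : ({b, b'} : Finset (Finset P))
        = 𝓑.filter (fun c => q ∈ c ∧ r ∈ c) := by
      apply Finset.eq_of_subset_of_card_le
      · intro c hc
        simp only [Finset.mem_insert, Finset.mem_singleton] at hc
        rcases hc with rfl | rfl
        · exact Finset.mem_filter.mpr ⟨hb, hqb, hrb⟩
        · exact Finset.mem_filter.mpr ⟨hb'B, hqb', hrb'⟩
      · rw [hpair q r hqr, Finset.card_insert_of_notMem (by simpa using hne.symm),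
          Finset.card_singleton]
    have hb'im : b'.image σ = b := by
      have hmem : b'.image σ ∈ ({b, b'} : Finset (Finset P)) := by
        rw [hPr]
        refine Finset.mem_filter.mpr ⟨hσ b' hb'B, ?_, ?_⟩
        · rw [← hq]; exact Finset.mem_image_of_mem σ hqb'
        · rw [← hr]; exact Finset.mem_image_of_mem σ hrb'
      simp only [Finset.mem_insert, Finset.mem_singleton] at hmem
      rcases hmem with h | h
      · exact h
      · exact absurd (himginj (h.trans hb'.symm ▸ h)) (by
          exact absurd (himginj (show b'.image σ = b.image σ from h)) hne)
    have hiter : ∀ n : ℕ, b.image (⇑(σ ^ n)) = if n % 2 = 0 then b else b' := by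
      intro n
      induction n with
      | zero => simp
      | succ m ih =>
        have hcomp : b.image (⇑(σ ^ (m + 1))) = (b.image (⇑(σ ^ m))).image σ := by
          rw [Finset.image_image]
          congr 1
          ext x
          rw [Function.comp_apply, ← Equiv.Perm.mul_apply, ← pow_succ']
        rw [hcomp, ih]
        by_cases h : m % 2 = 0
        · rw [if_pos h, if_neg (by omega)]
        · rw [if_neg h, if_pos (by omega), hb'im]
    have := hiter p
    rw [hσp, podd] at this
    rw [show ((1 : Equiv.Perm P) : P → P) = id from rfl, Finset.image_id] at this
    rw [if_neg (by norm_num)] at this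
    exact hne this.symm
  -- fixed blocks
  set FB := 𝓑.filter (fun c => c.image σ = c) with hFB_def
  have hFBpair : ∀ q r : P, σ q = q → σ r = r → q ≠ r →
      FB.filter (fun c => q ∈ c ∧ r ∈ c) = 𝓑.filter (fun c => q ∈ c ∧ r ∈ c) := by
    intro q r hq hr hqr
    ext c
    simp only [hFB_def, Finset.mem_filter]
    constructor
    · rintro ⟨⟨hc, _⟩, hqc, hrc⟩
      exact ⟨hc, hqc, hrc⟩
    · rintro ⟨hc, hqc, hrc⟩
      exact ⟨⟨hc, fact2 q r hq hr hqr c hc hqc hrc⟩, hqc, hrc⟩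
  -- Fact C : for a fixed block b and fixed point q on b, the number of fixed
  -- blocks through q equals the number of fixed points on b
  have factC : ∀ b ∈ 𝓑, b.image σ = b → ∀ q : P, σ q = q → q ∈ b →
      (FB.filter (fun c => q ∈ c)).card = (b.filter (fun x => σ x = x)).card := by
    intro b hb hbfix q hq hqb
    set FBq := FB.filter (fun c => q ∈ c) with hFBq_def
    have hbFBq : b ∈ FBq := Finset.mem_filter.mpr ⟨Finset.mem_filter.mpr ⟨hb, hbfix⟩, hqb⟩
    have hqbf : q ∈ b.filter (fun x => σ x = x) := Finset.mem_filter.mpr ⟨hqb, hq⟩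
    have key := dc' FBq (b.filter (fun x => σ x = x)) (fun c x => x ∈ c)
    have lhs1 : ∀ c ∈ FBq.erase b,
        ((b.filter (fun x => σ x = x)).filter (fun x => x ∈ c)).card = 2 := by
      intro c hc
      have hcb : c ≠ b := Finset.ne_of_mem_erase hc
      have hc' := Finset.mem_of_mem_erase hc
      rw [hFBq_def, Finset.mem_filter, Finset.mem_filter] at hc'
      obtain ⟨⟨hcB, hcfix⟩, hqc⟩ := hc'
      have hbc2 : (b ∩ c).card = 2 := inter2' hv 𝓑 hcard hk hpair b hb c hcB hcb
      have hset : (b.filter (fun x => σ x = x)).filter (fun x => x ∈ c) = b ∩ c := by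
        apply Finset.Subset.antisymm
        · intro x hx
          simp only [Finset.mem_filter, Finset.mem_inter] at hx ⊢
          exact ⟨hx.1.1, hx.2⟩
        · intro x hx
          have hfixx : σ x = x := pair_fixed' σ podd hσp (b ∩ c) hbc2
            (fun a ha => Finset.mem_inter.mpr
              ⟨hinv_mem b hbfix a (Finset.mem_inter.mp ha).1,
               hinv_mem c hcfix a (Finset.mem_inter.mp ha).2⟩) x hx
          simp only [Finset.mem_filter, Finset.mem_inter] at hx ⊢
          exact ⟨⟨hx.1, hfixx⟩, hx.2⟩
      rw [hset, hbc2]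
    have lhsb : ((b.filter (fun x => σ x = x)).filter (fun x => x ∈ b)).card
        = (b.filter (fun x => σ x = x)).card := by
      congr 1
      apply Finset.filter_true_of_mem
      intro x hx
      exact Finset.mem_of_mem_filter x hx
    rw [← Finset.sum_erase_add _ _ hbFBq, lhsb, Finset.sum_congr rfl lhs1,
      Finset.sum_const, smul_eq_mul, Finset.card_erase_of_mem hbFBq] at key
    have rhs1 : ∀ x ∈ (b.filter (fun x => σ x = x)).erase q,
        (FBq.filter (fun c => x ∈ c)).card = 2 := by
      intro x hx
      have hxq : x ≠ q := Finset.ne_of_mem_erase hx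
      have hx' := Finset.mem_of_mem_erase hx
      rw [Finset.mem_filter] at hx'
      have hstep : FBq.filter (fun c => x ∈ c) = FB.filter (fun c => q ∈ c ∧ x ∈ c) := by
        rw [hFBq_def, Finset.filter_filter]
      rw [hstep, hFBpair q x hq hx'.2 (Ne.symm hxq), hpair q x (Ne.symm hxq)]
    have rhsq : (FBq.filter (fun c => q ∈ c)).card = FBq.card := by
      congr 1
      apply Finset.filter_true_of_mem
      intro c hc
      rw [hFBq_def, Finset.mem_filter] at hc
      exact hc.2
    rw [← Finset.sum_erase_add _ _ hqbf, rhsq, Finset.sum_congr rfl rhs1,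
      Finset.sum_const, smul_eq_mul, Finset.card_erase_of_mem hqbf] at key
    have h1 : 1 ≤ FBq.card := Finset.card_pos.mpr ⟨b, hbFBq⟩
    have h2 : 1 ≤ (b.filter (fun x => σ x = x)).card := Finset.card_pos.mpr ⟨q, hqbf⟩
    omega
  -- a fixed point on B
  obtain ⟨q0, hq0B, hq0⟩ : ∃ q0, q0 ∈ B ∧ σ q0 = q0 := by
    have hne : (B.filter (fun q => σ q = q)).Nonempty := Finset.card_pos.mp (by omega)
    obtain ⟨q0, h⟩ := hne
    exact ⟨q0, (Finset.mem_filter.mp h).1, (Finset.mem_filter.mp h).2⟩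
  -- the number of fixed blocks through any fixed point is s
  have Nconst : ∀ q : P, σ q = q → (FB.filter (fun c => q ∈ c)).card = s := by
    intro q hq
    by_cases hqB : q ∈ B
    · rw [factC B hB hBfix q hq hqB]
    · have hqq0 : q ≠ q0 := fun h => hqB (h ▸ hq0B)
      have hne : (𝓑.filter (fun c => q ∈ c ∧ q0 ∈ c)).Nonempty := by
        rw [← Finset.card_pos, hpair q q0 hqq0]
        norm_num
      obtain ⟨c, hc⟩ := hne
      rw [Finset.mem_filter] at hc
      obtain ⟨hcB, hqc, hq0c⟩ := hc
      have hcfix : c.image σ = c := fact2 q q0 hq hq0 hqq0 c hcB hqc hq0c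
      rw [factC c hcB hcfix q hq hqc, ← factC c hcB hcfix q0 hq0 hq0c,
        factC B hB hBfix q0 hq0 hq0B]
  -- every fixed block with a fixed point has exactly s fixed points
  have sConst : ∀ b ∈ 𝓑, b.image σ = b → ∀ q : P, σ q = q → q ∈ b →
      (b.filter (fun x => σ x = x)).card = s := by
    intro b hb hbfix q hq hqb
    rw [← factC b hb hbfix q hq hqb, Nconst q hq]
  have hq0F : q0 ∈ Finset.univ.filter (fun q => σ q = q) :=
    Finset.mem_filter.mpr ⟨Finset.mem_univ _, hq0⟩
  -- the fundamental formula (f-1)*2 = s*(s-1)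
  have formula : (f - 1) * 2 = s * (s - 1) := by
    have key := dc' ((Finset.univ.filter (fun q => σ q = q)).erase q0)
      (FB.filter (fun c => q0 ∈ c)) (fun x c => x ∈ c)
    have lhs1 : ∀ x ∈ (Finset.univ.filter (fun q => σ q = q)).erase q0,
        ((FB.filter (fun c => q0 ∈ c)).filter (fun c => x ∈ c)).card = 2 := by
      intro x hx
      have hxq : x ≠ q0 := Finset.ne_of_mem_erase hx
      have hxfix : σ x = x := (Finset.mem_filter.mp (Finset.mem_of_mem_erase hx)).2
      rw [Finset.filter_filter, hFBpair q0 x hq0 hxfix (Ne.symm hxq),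
        hpair q0 x (Ne.symm hxq)]
    have rhs1 : ∀ c ∈ FB.filter (fun c => q0 ∈ c),
        (((Finset.univ.filter (fun q => σ q = q)).erase q0).filter
          (fun x => x ∈ c)).card = s - 1 := by
      intro c hc
      rw [hFB_def, Finset.mem_filter, Finset.mem_filter] at hc
      obtain ⟨⟨hcB, hcfix⟩, hq0c⟩ := hc
      have hset : ((Finset.univ.filter (fun q => σ q = q)).erase q0).filter
          (fun x => x ∈ c) = (c.filter (fun x => σ x = x)).erase q0 := by
        ext x
        simp only [Finset.mem_filter, Finset.mem_erase, Finset.mem_univ, true_and]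
        tauto
      have hq0mem : q0 ∈ c.filter (fun x => σ x = x) := Finset.mem_filter.mpr ⟨hq0c, hq0⟩
      rw [hset, Finset.card_erase_of_mem hq0mem, sConst c hcB hcfix q0 hq0 hq0c]
    rw [Finset.sum_congr rfl lhs1, Finset.sum_const, smul_eq_mul,
      Finset.card_erase_of_mem hq0F, Finset.sum_congr rfl rhs1,
      Finset.sum_const, smul_eq_mul, Nconst q0 hq0] at key
    exact key
  -- s ≤ f
  have hfs : s ≤ f := by
    rw [hs_def, hf_def]
    apply Finset.card_le_card
    intro x hx
    exact Finset.mem_filter.mpr ⟨Finset.mem_univ _, (Finset.mem_filter.mp hx).2⟩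
  -- there is a non-fixed point
  obtain ⟨y, hy⟩ : ∃ y : P, σ y ≠ y := by
    by_contra h
    push_neg at h
    have h1 : σ = 1 := Equiv.ext fun x => h x
    rw [h1, orderOf_one] at hord
    rcases hp with rfl | rfl | rfl <;> omega
  -- the bound f*2 ≤ 2*s + 16
  have hbound : f * 2 ≤ 2 * s + 16 := by
    have key := dc' (Finset.univ.filter (fun q => σ q = q))
      (𝓑.filter (fun c => y ∈ c)) (fun x c => x ∈ c)
    have lhs1 : ∀ x ∈ Finset.univ.filter (fun q => σ q = q),
        ((𝓑.filter (fun c => y ∈ c)).filter (fun c => x ∈ c)).card = 2 := by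
      intro x hx
      have hxfix : σ x = x := (Finset.mem_filter.mp hx).2
      have hyx : y ≠ x := fun h => hy (by rw [h]; exact hxfix)
      rw [Finset.filter_filter, hpair y x hyx]
    rw [Finset.sum_congr rfl lhs1, Finset.sum_const, smul_eq_mul] at key
    have hterm : ∀ c ∈ 𝓑.filter (fun c => y ∈ c),
        ((Finset.univ.filter (fun q => σ q = q)).filter (fun x => x ∈ c)).card
          ≤ if c.image σ = c then s else 1 := by
      intro c hc
      rw [Finset.mem_filter] at hc
      have hFc : (Finset.univ.filter (fun q => σ q = q)).filter (fun x => x ∈ c)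
          = c.filter (fun x => σ x = x) := by
        ext x
        simp only [Finset.mem_filter, Finset.mem_univ, true_and]
        tauto
      rw [hFc]
      split_ifs with hcf
      · rcases Finset.eq_empty_or_nonempty (c.filter (fun x => σ x = x)) with he | hne
        · rw [he, Finset.card_empty]
          exact Nat.zero_le s
        · obtain ⟨x, hx⟩ := hne
          rw [Finset.mem_filter] at hx
          rw [sConst c hc.1 hcf x hx.2 hx.1]
      · rw [Finset.card_le_one]
        intro a ha b' hb'
        rw [Finset.mem_filter] at ha hb'
        by_contra hab
        exact hcf (fact2 a b' ha.2 hb'.2 hab c hc.1 ha.1 hb'.1)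
    have hsplit : ∑ c ∈ 𝓑.filter (fun c => y ∈ c),
        (if c.image σ = c then s else 1) ≤ 2 * s + 16 := by
      rw [Finset.sum_ite, Finset.sum_const, Finset.sum_const, smul_eq_mul, smul_eq_mul,
        mul_one]
      have hc1 : ((𝓑.filter (fun c => y ∈ c)).filter (fun c => c.image σ = c)).card
          ≤ 2 := by
        have hsub : (𝓑.filter (fun c => y ∈ c)).filter (fun c => c.image σ = c)
            ⊆ 𝓑.filter (fun c => y ∈ c ∧ σ y ∈ c) := by
          intro c hc
          rw [Finset.mem_filter, Finset.mem_filter] at hc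
          exact Finset.mem_filter.mpr ⟨hc.1.1, hc.1.2, hinv_mem c hc.2 y hc.1.2⟩
        have := Finset.card_le_card hsub
        rw [hpair y (σ y) (fun h => hy h.symm)] at this
        exact this
      have hc2 : ((𝓑.filter (fun c => y ∈ c)).filter (fun c => ¬ c.image σ = c)).card
          ≤ 16 := by
        have := Finset.card_le_card
          (Finset.filter_subset (fun c => ¬ c.image σ = c) (𝓑.filter (fun c => y ∈ c)))
        rw [repl' hv 𝓑 hk hpair y] at this
        exact this
      have hmul : (((𝓑.filter (fun c => y ∈ c)).filter (fun c => c.image σ = c)).card) * s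
          ≤ 2 * s := Nat.mul_le_mul_right s hc1
      exact Nat.add_le_add hmul hc2
    calc f * 2 = ∑ c ∈ 𝓑.filter (fun c => y ∈ c),
          ((Finset.univ.filter (fun q => σ q = q)).filter (fun x => x ∈ c)).card := by
            rw [← key, hf_def]
      _ ≤ ∑ c ∈ 𝓑.filter (fun c => y ∈ c), (if c.image σ = c then s else 1) :=
            Finset.sum_le_sum hterm
      _ ≤ 2 * s + 16 := hsplit
  -- arithmetic endgame
  have hf1 : 1 ≤ f := le_trans hs1 hfs
  have h6 : (f - 1) * 2 ≤ 2 * s + 14 := by omega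
  have hsle : s * (s - 1) ≤ 2 * s + 14 := formula ▸ h6
  have hs5 : s ≤ 5 := by
    by_contra hgt
    push_neg at hgt
    have hmul : 6 * (s - 1) ≤ s * (s - 1) := Nat.mul_le_mul_right _ (by omega)
    omega
  rcases hp with rfl | rfl | rfl
  · left
    have hs : s = 1 := by omega
    have f0 := formula
    rw [hs] at f0
    norm_num at f0
    have hf : f = 1 := by omega
    rw [hs, hf]
  · right; left
    have hs : s = 2 := by omega
    have f0 := formula
    rw [hs] at f0
    norm_num at f0
    have hf : f = 2 := by omega
    rw [hs, hf]
  · right; right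
    have hs : s = 3 := by omega
    have f0 := formula
    rw [hs] at f0
    norm_num at f0
    have hf : f = 4 := by omega
    rw [hs, hf]
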